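/- Let G be a group, H ≤ G an (open) subgroup, E a Banach space, π : H → invertible isometries of E, ξ ∈ E and φ ∈ E*. Define f_ξ ∈ L^{p'}(G, H, π, E) by f_ξ(x) = π(γ(q(x))^{-1}x)^{-1} ξ if q(x) = H (the identity coset) and f_ξ(x) = 0 otherwise, and define g_φ ∈ L^p(G, H, π^t, E*) analogously by g_φ(x) = π(γ(q(x))^{-1}x)^t φ if q(x) = H and 0 otherwise. Then for every g ∈ G, the pairing ⟨L_g f_ξ, g_φ⟩ = ∑_{xH ∈ G/H} ⟨f_ξ(g^{-1}x), g_φ(x)⟩ equals ⟨π(g)ξ, φ⟩ if g ∈ H, and equals 0 if g ∉ H. -/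

import Mathlib

open scoped Classical

/-- For an open subgroup `H` of `G`, conjugate exponents `p, p'`, a
section `γ` with `γ(H) = e`, and `ξ ∈ E`, `φ ∈ E*`, let `f_ξ` and `g_φ` be the
canonical extensions supported on the identity coset. Then for every `g ∈ G` the
pairing `⟨L_g f_ξ, g_φ⟩ = ∑_{xH} ⟨f_ξ(g⁻¹x), g_φ(x)⟩` equals `⟨π(g)ξ, φ⟩` if
`g ∈ H`, and `0` if `g ∉ H`. -/
theorem stmt4 (G : Type*) [Group G] [TopologicalSpace G] [IsTopologicalGroup G]
    (H : Subgroup G) (hH : IsOpen (H : Set G))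
    (E : Type*) [NormedAddCommGroup E] [NormedSpace ℂ E] [CompleteSpace E]
    (π : H →* (E ≃ₗᵢ[ℂ] E)) (p p' : ℝ) (hp : 1 < p) (hp' : 1 < p')
    (hpq : 1 / p + 1 / p' = 1)
    (γ : G ⧸ H → G) (hγ : ∀ v : G ⧸ H, (QuotientGroup.mk (γ v) : G ⧸ H) = v)
    (hγ1 : γ (QuotientGroup.mk (1 : G) : G ⧸ H) = 1)
    (ξ : E) (φ : E →L[ℂ] ℂ)
    (fξ : G → E)
    (hfξ : ∀ x : G, fξ x =
      if (QuotientGroup.mk x : G ⧸ H) = (QuotientGroup.mk (1 : G) : G ⧸ H) then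
        (π ⟨(γ (QuotientGroup.mk x))⁻¹ * x,
            QuotientGroup.eq.mp (hγ (QuotientGroup.mk x))⟩).symm ξ
      else 0)
    (gφ : G → (E →L[ℂ] ℂ))
    (hgφ : ∀ x : G, gφ x =
      if (QuotientGroup.mk x : G ⧸ H) = (QuotientGroup.mk (1 : G) : G ⧸ H) then
        φ.comp ((π ⟨(γ (QuotientGroup.mk x))⁻¹ * x,
            QuotientGroup.eq.mp (hγ (QuotientGroup.mk x))⟩).toContinuousLinearEquiv
            : E →L[ℂ] E)
      else 0)
    (g : G) :
    (∀ hg : g ∈ H,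
      (∑' v : G ⧸ H, gφ v.out (fξ (g⁻¹ * v.out))) = φ (π ⟨g, hg⟩ ξ)) ∧
    (g ∉ H → (∑' v : G ⧸ H, gφ v.out (fξ (g⁻¹ * v.out))) = 0) := by
  classical
  set v₀ : G ⧸ H := (QuotientGroup.mk (1 : G) : G ⧸ H) with hv₀
  set x : G := v₀.out with hxdef
  have hmkx : (QuotientGroup.mk x : G ⧸ H) = v₀ := QuotientGroup.out_eq' v₀
  have hxH : x ∈ H := by simpa using QuotientGroup.eq.mp hmkx
  have key : ∀ v : G ⧸ H, v ≠ v₀ → gφ v.out (fξ (g⁻¹ * v.out)) = 0 := by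
    intro v hv
    rw [hgφ, if_neg, ContinuousLinearMap.zero_apply]
    rw [QuotientGroup.out_eq']
    exact hv
  have htsum : (∑' v : G ⧸ H, gφ v.out (fξ (g⁻¹ * v.out)))
      = gφ x (fξ (g⁻¹ * x)) := tsum_eq_single v₀ key
  have hγx : γ (QuotientGroup.mk x) = 1 := by rw [hmkx, hγ1]
  have hel : (⟨(γ (QuotientGroup.mk x : G ⧸ H))⁻¹ * x,
      QuotientGroup.eq.mp (hγ (QuotientGroup.mk x))⟩ : H) = ⟨x, hxH⟩ :=
    Subtype.ext (by simp [hγx])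
  have hgφx : gφ x = φ.comp ((π ⟨x, hxH⟩).toContinuousLinearEquiv : E →L[ℂ] E) := by
    rw [hgφ, if_pos hmkx, hel]
  constructor
  · intro hg
    have hgx : g⁻¹ * x ∈ H := H.mul_mem (H.inv_mem hg) hxH
    have hmkgx : (QuotientGroup.mk (g⁻¹ * x) : G ⧸ H) = v₀ := by
      rw [hv₀]; exact QuotientGroup.eq.mpr (by simpa using H.inv_mem hgx)
    have hγgx : γ (QuotientGroup.mk (g⁻¹ * x)) = 1 := by rw [hmkgx, hγ1]
    have hel2 : (⟨(γ (QuotientGroup.mk (g⁻¹ * x) : G ⧸ H))⁻¹ * (g⁻¹ * x),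
        QuotientGroup.eq.mp (hγ (QuotientGroup.mk (g⁻¹ * x)))⟩ : H) = ⟨g⁻¹ * x, hgx⟩ :=
      Subtype.ext (by simp [hγgx])
    have hfval : fξ (g⁻¹ * x) = (π ⟨g⁻¹ * x, hgx⟩).symm ξ := by
      rw [hfξ, if_pos hmkgx, hel2]
    rw [htsum, hgφx, hfval]
    have hel3 : (⟨x, hxH⟩ : H) * (⟨g⁻¹ * x, hgx⟩ : H)⁻¹ = ⟨g, hg⟩ :=
      Subtype.ext (by simp [mul_assoc])
    have h1 : (π ⟨g⁻¹ * x, hgx⟩).symm = π ((⟨g⁻¹ * x, hgx⟩ : H)⁻¹) := by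
      rw [map_inv]; rfl
    have h2 : (π ⟨x, hxH⟩) ((π ((⟨g⁻¹ * x, hgx⟩ : H)⁻¹)) ξ)
        = (π ((⟨x, hxH⟩ : H) * (⟨g⁻¹ * x, hgx⟩ : H)⁻¹)) ξ := by
      rw [map_mul]; rfl
    simp only [ContinuousLinearMap.comp_apply, h1]
    rw [show ((π ⟨x, hxH⟩).toContinuousLinearEquiv : E →L[ℂ] E)
        ((π ((⟨g⁻¹ * x, hgx⟩ : H)⁻¹)) ξ)
        = (π ⟨x, hxH⟩) ((π ((⟨g⁻¹ * x, hgx⟩ : H)⁻¹)) ξ) from rfl, h2, hel3]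
  · intro hg
    have hne : (QuotientGroup.mk (g⁻¹ * x) : G ⧸ H) ≠ v₀ := by
      rw [hv₀]
      intro hcon
      have h3 : g⁻¹ * x ∈ H := by simpa using H.inv_mem (QuotientGroup.eq.mp hcon)
      have h4 : g⁻¹ ∈ H := by
        simpa [mul_assoc] using H.mul_mem h3 (H.inv_mem hxH)
      exact hg (by simpa using H.inv_mem h4)
    have hfval : fξ (g⁻¹ * x) = 0 := by rw [hfξ, if_neg hne]
    rw [htsum, hfval, map_zero]
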